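/- Let σ be a relational vocabulary and 𝒜 a finite σ-structure. Then tw(𝒜) = κ^P(𝒜) − 1; that is, for every k ≥ 1, the Gaifman graph of 𝒜 has a tree decomposition of width at most k − 1 if and only if there exists a P_k-coalgebra α : 𝒜 → P_k 𝒜. -/

import Mathlib

/-- A relational vocabulary: a type of relation symbols with arities. -/
structure RelVocab : Type 1 where
  Rel : Type
  ar : Rel → ℕ

/-- A structure for a relational vocabulary. -/
structure RelStruct (σ : RelVocab) : Type 1 where
  carrier : Type
  rel : ∀ R : σ.Rel, (Fin (σ.ar R) → carrier) → Prop

/-- Homomorphisms of relational structures. -/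
def IsHom {σ : RelVocab} (𝒜 ℬ : RelStruct σ) (h : 𝒜.carrier → ℬ.carrier) : Prop :=
  ∀ (R : σ.Rel) (v : Fin (σ.ar R) → 𝒜.carrier), 𝒜.rel R v → ℬ.rel R (fun i => h (v i))

/-- Nonempty sequences of (pebble index, element) pairs: the universe of `P_k 𝒜`. -/
def PkC (k : ℕ) (A : Type) : Type :=
  {l : List (Fin k × A) // l ≠ []}

/-- The last move of a play. -/
def plast {k : ℕ} {A : Type} (s : PkC k A) : Fin k × A :=
  s.1.getLast s.2

/-- The counit: the element of the last move. -/
def peps {k : ℕ} {A : Type} (s : PkC k A) : A :=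
  (plast s).2

/-- Comparability in the prefix order. -/
def Cmp {A : Type} (s t : List A) : Prop :=
  s <+: t ∨ t <+: s

/-- The pebbling comonad `P_k` on structures. -/
def Pk {σ : RelVocab} (k : ℕ) (𝒜 : RelStruct σ) : RelStruct σ where
  carrier := PkC k 𝒜.carrier
  rel R v :=
    (∀ i j, Cmp (v i).1 (v j).1) ∧
    (∀ i j (u : List (Fin k × 𝒜.carrier)), (v j).1 = (v i).1 ++ u →
      (plast (v i)).1 ∉ u.map Prod.fst) ∧
    𝒜.rel R (fun i => peps (v i))

/-- The prefix of `s` of length `i+1`. -/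
def pPrefAt {k : ℕ} {A : Type} (s : PkC k A) (i : Fin s.1.length) : PkC k A :=
  ⟨s.1.take (i + 1), by
    apply List.ne_nil_of_length_pos
    rw [List.length_take]
    exact lt_min (Nat.succ_pos _) (Nat.lt_of_le_of_lt (Nat.zero_le _) i.2)⟩

/-- The Kleisli coextension for the pebbling comonad. -/
def pcoext {k : ℕ} {A B : Type} (f : PkC k A → B) (s : PkC k A) : PkC k B :=
  ⟨List.ofFn (fun i : Fin s.1.length => ((s.1.get i).1, f (pPrefAt s i))), by
    apply List.ne_nil_of_length_pos
    rw [List.length_ofFn]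
    exact List.length_pos_iff.mpr s.2⟩

/-- The adjacency relation of the Gaifman graph of `𝒜`. -/
def gaif {σ : RelVocab} (𝒜 : RelStruct σ) (a a' : 𝒜.carrier) : Prop :=
  a ≠ a' ∧ ∃ (R : σ.Rel) (v : Fin (σ.ar R) → 𝒜.carrier),
    𝒜.rel R v ∧ (∃ i, v i = a) ∧ (∃ j, v j = a')

/-- A `P_k`-coalgebra on `𝒜`: a homomorphism `α : 𝒜 → P_k 𝒜` such that, writing
`α(a) = [(p_1,a_1),…,(p_j,a_j)]`, one has `a_j = a` and
`α(a_i) = [(p_1,a_1),…,(p_i,a_i)]` for `1 ≤ i ≤ j`. -/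
structure PkCoalgebra {σ : RelVocab} (𝒜 : RelStruct σ) (k : ℕ) where
  α : 𝒜.carrier → PkC k 𝒜.carrier
  hom : IsHom 𝒜 (Pk k 𝒜) α
  counit : ∀ a, peps (α a) = a
  comult : ∀ (a : 𝒜.carrier) (i : Fin (α a).1.length),
    (α ((α a).1.get i).2).1 = (α a).1.take (i + 1)

/-- A tree decomposition of the graph `(V, adj)`: a tree order `(T, le)` (a partial
order with predecessor sets finite chains and a least element), which therefore has
binary meets, together with a labelling `lam : T → Set V` satisfying (TD1)–(TD3). -/
structure TreeDecomp (V : Type) (adj : V → V → Prop) where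
  T : Type
  le : T → T → Prop
  refl : ∀ x, le x x
  antisymm : ∀ x y, le x y → le y x → x = y
  trans : ∀ x y z, le x y → le y z → le x z
  pred_finite : ∀ x, {y | le y x}.Finite
  pred_chain : ∀ x, IsChain le {y | le y x}
  bot : T
  bot_le : ∀ x, le bot x
  meet : T → T → T
  meet_le_left : ∀ x y, le (meet x y) x
  meet_le_right : ∀ x y, le (meet x y) y
  le_meet : ∀ x y z, le z x → le z y → le z (meet x y)
  lam : T → Set V
  td1 : ∀ v, ∃ x, v ∈ lam x
  td2 : ∀ v v', adj v v' → ∃ x, v ∈ lam x ∧ v' ∈ lam x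
  td3 : ∀ v x x' y, v ∈ lam x → v ∈ lam x' →
    ((le (meet x x') y ∧ le y x) ∨ (le (meet x x') y ∧ le y x')) → v ∈ lam y

/-- A `k`-pebble forest cover of the graph `(V, adj)`: a forest order on `V` in which
adjacent vertices are comparable, together with a pebbling function `p : V → {1,…,k}`
such that if `v ⌢ v'` and `v ≤ v'`, then `p(v) ≠ p(w)` for all `w` with `v < w ≤ v'`. -/
structure PebbleForestCover (V : Type) (adj : V → V → Prop) (k : ℕ) where
  le : V → V → Prop
  refl : ∀ a, le a a
  antisymm : ∀ a b, le a b → le b a → a = b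
  trans : ∀ a b c, le a b → le b c → le a c
  pred_finite : ∀ a, {b | le b a}.Finite
  pred_chain : ∀ a, IsChain le {b | le b a}
  cover : ∀ a a', adj a a' → le a a' ∨ le a' a
  peb : V → Fin k
  peb_cond : ∀ v v' w, adj v v' → le v v' → le v w → v ≠ w → le w v' → peb v ≠ peb w

lemma chain_least {X : Type} (r : X → X → Prop) (hrefl : ∀ x, r x x)
    (htrans : ∀ x y z, r x y → r y z → r x z)
    (s : Finset X) (hne : s.Nonempty)
    (hchain : ∀ a ∈ s, ∀ b ∈ s, r a b ∨ r b a) :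
    ∃ m ∈ s, ∀ y ∈ s, r m y := by
  classical
  induction s using Finset.induction_on with
  | empty => exact absurd hne (by simp)
  | insert _ _ hnotmem ih =>
    rename_i a s
    by_cases hs : s.Nonempty
    · obtain ⟨m, hm, hmin⟩ := ih hs (fun x hx y hy => hchain x (Finset.mem_insert_of_mem hx) y (Finset.mem_insert_of_mem hy))
      rcases hchain a (Finset.mem_insert_self a s) m (Finset.mem_insert_of_mem hm) with h | h
      · exact ⟨a, Finset.mem_insert_self a s, fun y hy => by
          rcases Finset.mem_insert.mp hy with rfl | hy
          · exact hrefl y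
          · exact htrans _ _ _ h (hmin y hy)⟩
      · exact ⟨m, Finset.mem_insert_of_mem hm, fun y hy => by
          rcases Finset.mem_insert.mp hy with rfl | hy
          · exact h
          · exact hmin y hy⟩
    · refine ⟨a, Finset.mem_insert_self a s, fun y hy => ?_⟩
      rcases Finset.mem_insert.mp hy with rfl | hy
      · exact hrefl y
      · exact absurd ⟨y, hy⟩ hs

lemma chain_greatest {X : Type} (r : X → X → Prop) (hrefl : ∀ x, r x x)
    (htrans : ∀ x y z, r x y → r y z → r x z)
    (s : Finset X) (hne : s.Nonempty)
    (hchain : ∀ a ∈ s, ∀ b ∈ s, r a b ∨ r b a) :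
    ∃ m ∈ s, ∀ y ∈ s, r y m :=
  chain_least (fun a b => r b a) hrefl (fun x y z h1 h2 => htrans z y x h2 h1) s hne
    (fun a ha b hb => (hchain a ha b hb).symm)

lemma exists_peb {V : Type} [Finite V] (le' : V → V → Prop) (B : V → Set V) (k : ℕ)
    (hanti : ∀ a b, le' a b → le' b a → a = b)
    (htrans : ∀ a b c, le' a b → le' b c → le' a c)
    (hmem : ∀ b, b ∈ B b) (hcard : ∀ b, (B b).ncard ≤ k) (hk : 1 ≤ k) :
    ∃ p : V → Fin k, ∀ a b, le' a b → a ≠ b → a ∈ B b → p a ≠ p b := by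
  classical
  haveI : Fintype V := Fintype.ofFinite V
  set rank : V → ℕ := fun a => ({c | le' c a ∧ c ≠ a}).ncard with hrank
  have hr : ∀ a b, le' a b → a ≠ b → rank a < rank b := by
    intro a b hab hne
    apply Set.ncard_lt_ncard
    · constructor
      · intro c hc
        refine ⟨htrans _ _ _ hc.1 hab, ?_⟩
        rintro rfl
        exact hne (hanti _ _ hab hc.1)
      · intro hsub
        have : a ∈ {c | le' c a ∧ c ≠ a} := hsub ⟨hab, hne⟩
        exact this.2 rfl
    · exact Set.toFinite _
  have wf : WellFounded (InvImage Nat.lt rank) := InvImage.wf rank Nat.lt_wfRel.wf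
  have hpos : ∀ (x : V) (ih : ∀ y : V, InvImage Nat.lt rank y x → Fin k),
      (Finset.univ \ (Set.toFinset {a | le' a x ∧ a ≠ x ∧ a ∈ B x}).image
        (fun a => if h : rank a < rank x then ih a h else ⟨0, hk⟩)).Nonempty := by
    intro x ih
    rw [← Finset.card_pos, Finset.card_sdiff_of_subset (Finset.subset_univ _), Finset.card_univ,
      Fintype.card_fin]
    have h2 : (Set.toFinset {a | le' a x ∧ a ≠ x ∧ a ∈ B x}).card ≤ k - 1 := by
      have hsub : {a | le' a x ∧ a ≠ x ∧ a ∈ B x} ⊆ B x \ {x} := by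
        rintro a ⟨h1, h2, h3⟩; exact ⟨h3, h2⟩
      have h3 := Set.ncard_le_ncard hsub ((Set.toFinite (B x)).diff)
      rw [Set.ncard_diff_singleton_of_mem (hmem x)] at h3
      rw [← Set.ncard_eq_toFinset_card']
      exact le_trans h3 (Nat.sub_le_sub_right (hcard x) 1)
    have h1 : ((Set.toFinset {a | le' a x ∧ a ≠ x ∧ a ∈ B x}).image
        (fun a => if h : rank a < rank x then ih a h else ⟨0, hk⟩)).card ≤ k - 1 :=
      le_trans Finset.card_image_le h2
    omega
  set F : ∀ x : V, (∀ y : V, InvImage Nat.lt rank y x → Fin k) → Fin k := fun x ih =>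
    (Finset.univ \ (Set.toFinset {a | le' a x ∧ a ≠ x ∧ a ∈ B x}).image
        (fun a => if h : rank a < rank x then ih a h else ⟨0, hk⟩)).min' (hpos x ih) with hF
  set p : V → Fin k := wf.fix F with hp
  refine ⟨p, fun a b hab hne hB => ?_⟩
  have heq : p b = F b (fun y _ => p y) := wf.fix_eq F b
  have hmem' : p a ∈ (Set.toFinset {a | le' a b ∧ a ≠ b ∧ a ∈ B b}).image
      (fun c => if h : rank c < rank b then p c else ⟨0, hk⟩) := by
    refine Finset.mem_image.mpr ⟨a, ?_, ?_⟩
    · rw [Set.mem_toFinset]; exact ⟨hab, hne, hB⟩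
    · rw [dif_pos (hr a b hab hne)]
  intro hcontra
  have h2 : p b ∈ Finset.univ \ (Set.toFinset {a | le' a b ∧ a ≠ b ∧ a ∈ B b}).image
      (fun c => if h : rank c < rank b then p c else ⟨0, hk⟩) := by
    rw [heq]
    exact Finset.min'_mem _ _
  have h3 := (Finset.mem_sdiff.mp h2).2
  rw [← hcontra] at h3
  exact h3 hmem'

lemma rank_lt {V : Type} [Finite V] (le' : V → V → Prop)
    (hanti : ∀ a b, le' a b → le' b a → a = b)
    (htrans : ∀ a b c, le' a b → le' b c → le' a c)
    {a b : V} (hab : le' a b) (hne : a ≠ b) :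
    ({c | le' c a ∧ c ≠ a}).ncard < ({c | le' c b ∧ c ≠ b}).ncard := by
  apply Set.ncard_lt_ncard
  · constructor
    · intro c hc
      refine ⟨htrans _ _ _ hc.1 hab, ?_⟩
      rintro rfl
      exact hne (hanti _ _ hab hc.1)
    · intro hsub
      exact (hsub ⟨hab, hne⟩).2 rfl
  · exact Set.toFinite _

lemma coverToCoalg {σ : RelVocab} (𝒜 : RelStruct σ) (hfin : Finite 𝒜.carrier) {k : ℕ}
    (C : PebbleForestCover 𝒜.carrier (gaif 𝒜) k) : Nonempty (PkCoalgebra 𝒜 k) := by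
  classical
  haveI : Finite 𝒜.carrier := hfin
  haveI : Fintype 𝒜.carrier := Fintype.ofFinite _
  set V := 𝒜.carrier with hV
  set rank : V → ℕ := fun a => ({c | C.le c a ∧ c ≠ a}).ncard with hrankdef
  have hr : ∀ a b : V, C.le a b → a ≠ b → rank a < rank b :=
    fun a b hab hne => rank_lt C.le C.antisymm C.trans hab hne
  have wf : WellFounded (InvImage Nat.lt rank) := InvImage.wf rank Nat.lt_wfRel.wf
  -- immediate predecessor
  have hpr : ∀ a : V, ({b | C.le b a ∧ b ≠ a}).Nonempty →
      ∃ m, (C.le m a ∧ m ≠ a) ∧ ∀ c, C.le c a → c ≠ a → C.le c m := by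
    intro a hne
    obtain ⟨m, hm, hmax⟩ := chain_greatest C.le C.refl C.trans
      (Set.toFinset {b | C.le b a ∧ b ≠ a})
      (by rwa [Set.toFinset_nonempty])
      (by
        intro x hx y hy
        rw [Set.mem_toFinset] at hx hy
        by_cases hxy : x = y
        · exact Or.inl (hxy ▸ C.refl x)
        · exact C.pred_chain a hx.1 hy.1 hxy)
    rw [Set.mem_toFinset] at hm
    exact ⟨m, hm, fun c h1 h2 => hmax c (by rw [Set.mem_toFinset]; exact ⟨h1, h2⟩)⟩
  set F : ∀ a : V, (∀ y : V, InvImage Nat.lt rank y a → List (Fin k × V)) →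
      List (Fin k × V) := fun a ih =>
    if h : ({b | C.le b a ∧ b ≠ a}).Nonempty then
      ih (hpr a h).choose (hr _ _ (hpr a h).choose_spec.1.1 (hpr a h).choose_spec.1.2)
        ++ [(C.peb a, a)]
    else [(C.peb a, a)] with hF
  set f : V → List (Fin k × V) := wf.fix F with hf
  have feq : ∀ a, f a = F a (fun y _ => f y) := fun a => wf.fix_eq F a
  -- master lemma
  have Q : ∀ a : V,
      (f a ≠ []) ∧
      (∀ h : f a ≠ [], (f a).getLast h = (C.peb a, a)) ∧
      (∀ b, C.le b a → f b <+: f a) ∧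
      (∀ i (hi : i < (f a).length),
        f ((f a)[i]'hi).2 = (f a).take (i+1) ∧
        ((f a)[i]'hi).1 = C.peb ((f a)[i]'hi).2 ∧
        C.le ((f a)[i]'hi).2 a) := by
    intro a
    induction a using WellFounded.induction wf with
    | _ a IH =>
    by_cases h : ({b | C.le b a ∧ b ≠ a}).Nonempty
    · set m := (hpr a h).choose with hm
      have hms := (hpr a h).choose_spec
      have hfa : f a = f m ++ [(C.peb a, a)] := by
        rw [feq a, hF]
        simp only [dif_pos h]; rfl
      have IHm := IH m (hr _ _ hms.1.1 hms.1.2)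
      obtain ⟨hne, hlast, hpre, hget⟩ := IHm
      refine ⟨?_, ?_, ?_, ?_⟩
      · rw [hfa]; simp
      · intro hh
        rw [List.getLast_eq_getElem, List.getElem_of_eq hfa]
        exact List.getElem_concat_length (by rw [hfa]; simp) _
      · intro b hba
        by_cases hba' : b = a
        · subst hba'; exact List.prefix_refl _
        · have : f b <+: f m := hpre b (hms.2 b hba hba')
          rw [hfa]
          exact this.trans ⟨[(C.peb a, a)], rfl⟩
      · intro i hi
        have hi' : i < (f m ++ [(C.peb a, a)]).length := by rw [← hfa]; exact hi
        have hgeta : (f a)[i]'hi = (f m ++ [(C.peb a, a)])[i]'hi' :=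
          List.getElem_of_eq hfa hi
        rw [hgeta]
        rcases Nat.lt_or_ge i (f m).length with hlt | hge
        · have hgeteq : (f m ++ [(C.peb a, a)])[i]'hi' = (f m)[i]'hlt :=
            List.getElem_append_left hlt
          rw [hgeteq]
          obtain ⟨h1, h2, h3⟩ := hget i hlt
          refine ⟨?_, h2, C.trans _ _ _ h3 hms.1.1⟩
          rw [hfa, List.take_append_of_le_length (by omega)]
          exact h1
        · have hlen : i = (f m).length := by
            have := hi'
            simp only [List.length_append, List.length_singleton] at this
            omega
          have hgeteq : (f m ++ [(C.peb a, a)])[i]'hi' = (C.peb a, a) :=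
            List.getElem_concat_length hlen hi'
          rw [hgeteq]
          refine ⟨?_, rfl, C.refl a⟩
          rw [List.take_of_length_le (by rw [hfa]; simp [hlen])]
    · have hfa : f a = [(C.peb a, a)] := by
        rw [feq a, hF]
        simp only [dif_neg h]
      refine ⟨?_, ?_, ?_, ?_⟩
      · rw [hfa]; simp
      · intro hh
        rw [List.getLast_eq_getElem, List.getElem_of_eq hfa]
        simp
      · intro b hba
        by_cases hba' : b = a
        · subst hba'; exact List.prefix_refl _
        · exact absurd (⟨b, hba, hba'⟩ : ({b | C.le b a ∧ b ≠ a}).Nonempty) h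
      · intro i hi
        have hi' : i < ([(C.peb a, a)] : List (Fin k × V)).length := by rw [← hfa]; exact hi
        have hgeta : (f a)[i]'hi = ([(C.peb a, a)])[i]'hi' := List.getElem_of_eq hfa hi
        rw [hgeta, List.getElem_singleton]
        have hi0 : i = 0 := by simpa using hi'
        subst hi0
        refine ⟨?_, rfl, C.refl a⟩
        rw [hfa]
        rfl
  -- prefix implies le
  have hple : ∀ b c : V, f b <+: f c → C.le b c := by
    intro b c hpre
    have hneb := (Q b).1
    have hlenb : 0 < (f b).length := List.length_pos_iff.mpr hneb
    have hlast := (Q b).2.1 hneb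
    rw [List.getLast_eq_getElem] at hlast
    have hidx : (f b).length - 1 < (f b).length := by omega
    have hidx' : (f b).length - 1 < (f c).length := lt_of_lt_of_le hidx hpre.length_le
    have hgeteq : (f b)[(f b).length - 1]'hidx = (f c)[(f b).length - 1]'hidx' :=
      hpre.getElem hidx
    have h3 := ((Q c).2.2.2 ((f b).length - 1) hidx').2.2
    rw [← hgeteq, hlast] at h3
    exact h3
  -- the coalgebra
  refine ⟨{ α := fun a => ⟨f a, (Q a).1⟩, hom := ?_, counit := ?_, comult := ?_ }⟩
  · intro R v hrel
    have hadj : ∀ i j, v i ≠ v j → gaif 𝒜 (v i) (v j) := by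
      intro i j hne
      exact ⟨hne, R, v, hrel, ⟨i, rfl⟩, ⟨j, rfl⟩⟩
    have hcmp : ∀ i j, Cmp (f (v i)) (f (v j)) := by
      intro i j
      by_cases hne : v i = v j
      · rw [hne]; exact Or.inl (List.prefix_refl _)
      · rcases C.cover _ _ (hadj i j hne) with h | h
        · exact Or.inl ((Q (v j)).2.2.1 _ h)
        · exact Or.inr ((Q (v i)).2.2.1 _ h)
    refine ⟨fun i j => hcmp i j, ?_, ?_⟩
    · intro i j u hu hmem
      simp only at hu
      -- plast of ⟨f (v i), _⟩
      have hplast : (plast (⟨f (v i), (Q (v i)).1⟩ : PkC k V)).1 = C.peb (v i) := by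
        show ((f (v i)).getLast _).1 = _
        rw [(Q (v i)).2.1]
      rw [hplast] at hmem
      by_cases hij : v i = v j
      · have : f (v i) = f (v i) ++ u := by rw [← hij] at hu; exact hu
        have : u = [] := by
          have := congrArg List.length this
          simp only [List.length_append] at this
          exact List.eq_nil_of_length_eq_zero (by omega)
        subst this
        simp at hmem
      · -- find the entry of u carrying pebble C.peb (v i)
        obtain ⟨x, hxu, hx⟩ := List.mem_map.mp hmem
        obtain ⟨n, hn, hxn⟩ := List.mem_iff_getElem.mp hxu
        have hlen : (f (v i)).length + n < (f (v j)).length := by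
          rw [hu, List.length_append]; omega
        have hgeteq : (f (v j))[(f (v i)).length + n]'hlen = x := by
          rw [List.getElem_of_eq hu, List.getElem_append_right (by omega)]
          simpa using hxn
        obtain ⟨hw1, hw2, hw3⟩ := (Q (v j)).2.2.2 _ hlen
        set w := ((f (v j))[(f (v i)).length + n]'hlen).2 with hwdef
        -- C.peb w = C.peb (v i)
        have hpebw : C.peb w = C.peb (v i) := by
          rw [← hw2, hgeteq, hx]
        -- f (v i) <+: f w
        have hprefij : f (v i) <+: f (v j) := ⟨u, hu.symm⟩
        have hfw : f w = (f (v j)).take ((f (v i)).length + n + 1) := hw1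
        have hprefw : f (v i) <+: f w := by
          rw [hfw]
          apply List.prefix_of_prefix_length_le hprefij (List.take_prefix _ _)
          rw [List.length_take]
          omega
        have hlew : C.le (v i) w := hple _ _ hprefw
        have hnew : v i ≠ w := by
          intro hcon
          have : f (v i) = f w := by rw [hcon]
          have := congrArg List.length this
          rw [hfw, List.length_take] at this
          omega
        have hlevij : C.le (v i) (v j) := hple _ _ hprefij
        exact C.peb_cond (v i) (v j) w (hadj i j hij) hlevij hlew hnew hw3 hpebw.symm
    · have hv : (fun i => peps (⟨f (v i), (Q (v i)).1⟩ : PkC k V)) = v := by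
        funext i
        show ((f (v i)).getLast _).2 = v i
        rw [(Q (v i)).2.1]
      rw [hv]
      exact hrel
  · intro a
    show ((f a).getLast _).2 = a
    rw [(Q a).2.1]
  · intro a i
    exact ((Q a).2.2.2 i.1 i.2).1

lemma coalgToTD {σ : RelVocab} (𝒜 : RelStruct σ) (hfin : Finite 𝒜.carrier) {k : ℕ}
    (G : PkCoalgebra 𝒜 k) :
    ∃ D : TreeDecomp 𝒜.carrier (gaif 𝒜), ∀ x, (D.lam x).Finite ∧ (D.lam x).ncard ≤ k := by
  classical
  haveI : Finite 𝒜.carrier := hfin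
  haveI : Fintype 𝒜.carrier := Fintype.ofFinite _
  set V := 𝒜.carrier with hV
  set α := G.α with hα
  -- injectivity-style fact
  have hinj : ∀ a b : V, (α a).1 = (α b).1 → a = b := by
    intro a b h
    have h2 : G.α a = G.α b := Subtype.ext h
    rw [← G.counit a, ← G.counit b, h2]
  -- the tree order on Option V
  set le : Option V → Option V → Prop := fun x y =>
    match x, y with
    | none, _ => True
    | some _, none => False
    | some a, some b => (α a).1 <+: (α b).1 with hle
  have hle_ss : ∀ a b : V, le (some a) (some b) ↔ (α a).1 <+: (α b).1 := fun a b => Iff.rfl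
  -- meet existence
  have hex : ∀ (a b c : V), (α c).1 <+: (α a).1 → (α c).1 <+: (α b).1 →
      ∃ m, ((α m).1 <+: (α a).1 ∧ (α m).1 <+: (α b).1) ∧
        ∀ d, (α d).1 <+: (α a).1 → (α d).1 <+: (α b).1 →
          (α d).1.length ≤ (α m).1.length := by
    intro a b c h1 h2
    obtain ⟨m, hm, hmax⟩ := Finset.exists_max_image
      (Set.toFinset {d | (α d).1 <+: (α a).1 ∧ (α d).1 <+: (α b).1})
      (fun d => (α d).1.length)
      ⟨c, by rw [Set.mem_toFinset]; exact ⟨h1, h2⟩⟩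
    rw [Set.mem_toFinset] at hm
    exact ⟨m, hm, fun d hd1 hd2 => hmax d (by rw [Set.mem_toFinset]; exact ⟨hd1, hd2⟩)⟩
  set meet : Option V → Option V → Option V := fun x y =>
    match x, y with
    | none, _ => none
    | some _, none => none
    | some a, some b =>
      if h : ∃ m, ((α m).1 <+: (α a).1 ∧ (α m).1 <+: (α b).1) ∧
          ∀ d, (α d).1 <+: (α a).1 → (α d).1 <+: (α b).1 →
            (α d).1.length ≤ (α m).1.length then some h.choose else none
    with hmeet
  -- the bags
  set lam : Option V → Set V := fun x =>
    match x with
    | none => ∅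
    | some a => {v | ∃ u, (α a).1 = (α v).1 ++ u ∧ (plast (α v)).1 ∉ u.map Prod.fst}
    with hlam
  have hlam_self : ∀ a : V, a ∈ lam (some a) := by
    intro a
    exact ⟨[], by simp, by simp⟩
  refine ⟨{
    T := Option V
    le := le
    refl := ?_
    antisymm := ?_
    trans := ?_
    pred_finite := fun x => Set.toFinite _
    pred_chain := ?_
    bot := none
    bot_le := fun x => trivial
    meet := meet
    meet_le_left := ?_
    meet_le_right := ?_
    le_meet := ?_
    lam := lam
    td1 := fun v => ⟨some v, hlam_self v⟩
    td2 := ?_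
    td3 := ?_ }, ?_⟩
  · rintro (_ | a)
    · trivial
    · exact List.prefix_refl _
  · rintro (_ | a) (_ | b) h1 h2
    · rfl
    · exact h2.elim
    · exact h1.elim
    · exact congrArg some (hinj a b (h1.eq_of_length_le h2.length_le))
  · rintro (_ | a) (_ | b) (_ | c) h1 h2 <;> try trivial
    exact List.IsPrefix.trans h1 h2
  · rintro (_ | x)
    · intro y hy z hz hne
      rcases y with _ | a
      · exact Or.inl trivial
      · exact hy.elim
    · intro y hy z hz hne
      rcases y with _ | a
      · exact Or.inl trivial
      rcases z with _ | b
      · exact Or.inr trivial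
      simp only [Set.mem_setOf_eq] at hy hz
      rcases le_total (α a).1.length (α b).1.length with h | h
      · exact Or.inl (List.prefix_of_prefix_length_le hy hz h)
      · exact Or.inr (List.prefix_of_prefix_length_le hz hy h)
  · rintro (_ | a) (_ | b) <;> try trivial
    show le _ _
    by_cases h : ∃ m, ((α m).1 <+: (α a).1 ∧ (α m).1 <+: (α b).1) ∧
        ∀ d, (α d).1 <+: (α a).1 → (α d).1 <+: (α b).1 →
          (α d).1.length ≤ (α m).1.length
    · show le (dite _ _ _) _
      rw [dif_pos h]
      exact h.choose_spec.1.1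
    · show le (dite _ _ _) _
      rw [dif_neg h]
      trivial
  · rintro (_ | a) (_ | b) <;> try trivial
    show le _ _
    by_cases h : ∃ m, ((α m).1 <+: (α a).1 ∧ (α m).1 <+: (α b).1) ∧
        ∀ d, (α d).1 <+: (α a).1 → (α d).1 <+: (α b).1 →
          (α d).1.length ≤ (α m).1.length
    · show le (dite _ _ _) _
      rw [dif_pos h]
      exact h.choose_spec.1.2
    · show le (dite _ _ _) _
      rw [dif_neg h]
      trivial
  · rintro (_ | a) (_ | b) (_ | c) h1 h2 <;> try trivial
    · -- z = some c ≤ some a, some b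
      have hx := hex a b c h1 h2
      show le _ (dite _ _ _)
      rw [dif_pos hx]
      have hspec := hx.choose_spec
      exact List.prefix_of_prefix_length_le h1 hspec.1.1 (hspec.2 c h1 h2)
  · -- td2
    intro v v' hadj
    obtain ⟨hne, R, w, hrel, ⟨i, hi⟩, ⟨j, hj⟩⟩ := hadj
    have hhom := G.hom R w hrel
    obtain ⟨hcmp, hpeb, _⟩ := hhom
    rcases hcmp i j with h | h
    · have h' : (α (w i)).1 <+: (α (w j)).1 := h
      obtain ⟨u, hu⟩ := h'
      have hp : (plast (α (w i))).1 ∉ u.map Prod.fst := hpeb i j u hu.symm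
      refine ⟨some v', ?_, hlam_self v'⟩
      refine ⟨u, ?_, ?_⟩
      · rw [← hi, ← hj]; exact hu.symm
      · rw [← hi]; exact hp
    · have h' : (α (w j)).1 <+: (α (w i)).1 := h
      obtain ⟨u, hu⟩ := h'
      have hp : (plast (α (w j))).1 ∉ u.map Prod.fst := hpeb j i u hu.symm
      refine ⟨some v, hlam_self v, ?_⟩
      refine ⟨u, ?_, ?_⟩
      · rw [← hi, ← hj]; exact hu.symm
      · rw [← hj]; exact hp
  · -- td3
    rintro v (_ | a) (_ | a') y hvx hvx' hy
    · exact hvx.elim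
    · exact hvx.elim
    · exact hvx'.elim
    obtain ⟨u, hu, hpu⟩ := hvx
    obtain ⟨u', hu', hpu'⟩ := hvx'
    have hva : (α v).1 <+: (α a).1 := ⟨u, hu.symm⟩
    have hva' : (α v).1 <+: (α a').1 := ⟨u', hu'.symm⟩
    have hx := hex a a' v hva hva'
    have hmeet_eq : meet (some a) (some a') = some hx.choose := dif_pos hx
    have hspec := hx.choose_spec
    have hvm : (α v).1 <+: (α hx.choose).1 :=
      List.prefix_of_prefix_length_le hva hspec.1.1 (hspec.2 v hva hva')
    -- y must be some b
    rcases y with _ | b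
    · exfalso
      rcases hy with ⟨hy1, _⟩ | ⟨hy1, _⟩ <;>
      · rw [hmeet_eq] at hy1
        exact hy1
    · -- v ≤ b ≤ a or a'
      have hvb : (α v).1 <+: (α b).1 := by
        rcases hy with ⟨hy1, _⟩ | ⟨hy1, _⟩ <;>
        · rw [hmeet_eq] at hy1
          exact hvm.trans hy1
      obtain ⟨ub, hub⟩ := hvb
      refine ⟨ub, hub.symm, ?_⟩
      rcases hy with ⟨_, hy2⟩ | ⟨_, hy2⟩
      · -- b ≤ a
        have hba : (α b).1 <+: (α a).1 := hy2
        have : (α v).1 ++ ub <+: (α v).1 ++ u := by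
          rw [hub, ← hu]; exact hba
        have hsub : ub <+: u := (List.prefix_append_right_inj _).mp this
        intro hmem
        exact hpu (List.Sublist.mem hmem (hsub.sublist.map _))
      · have hba : (α b).1 <+: (α a').1 := hy2
        have : (α v).1 ++ ub <+: (α v).1 ++ u' := by
          rw [hub, ← hu']; exact hba
        have hsub : ub <+: u' := (List.prefix_append_right_inj _).mp this
        intro hmem
        exact hpu' (List.Sublist.mem hmem (hsub.sublist.map _))
  · -- bags finite and small
    rintro (_ | a)
    · refine ⟨Set.toFinite _, ?_⟩
      show (∅ : Set V).ncard ≤ k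
      simp
    refine ⟨Set.toFinite _, ?_⟩
    have : (lam (some a)).ncard ≤ (Set.univ : Set (Fin k)).ncard := by
      apply Set.ncard_le_ncard_of_injOn (fun v => (plast (α v)).1)
      · intro v _; trivial
      · intro x hx y hy hxy0
        have hxy : (plast (α x)).1 = (plast (α y)).1 := hxy0
        obtain ⟨ux, hux, hpx⟩ := hx
        obtain ⟨uy, huy, hpy⟩ := hy
        by_contra hne
        -- comparable prefixes
        have hxa : (α x).1 <+: (α a).1 := ⟨ux, hux.symm⟩
        have hya : (α y).1 <+: (α a).1 := ⟨uy, huy.symm⟩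
        have hlne : (α x).1 ≠ (α y).1 := fun h => hne (hinj x y h)
        -- wlog x's list shorter
        rcases le_total (α x).1.length (α y).1.length with h | h
        · have hpre : (α x).1 <+: (α y).1 := List.prefix_of_prefix_length_le hxa hya h
          obtain ⟨w, hw⟩ := hpre
          have hwne : w ≠ [] := by
            intro hw0
            rw [hw0, List.append_nil] at hw
            exact hlne hw
          -- last of α y is in w, and w is a sublist of ux
          have hlast : plast (α y) ∈ w := by
            have hlw : (α x).1.length + w.length = (α y).1.length := by
              rw [← hw]; simp
            have hwpos : 0 < w.length := List.length_pos_iff.mpr hwne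
            have hypos : 0 < (α y).1.length := List.length_pos_iff.mpr (α y).2
            have hidx : (α y).1.length - 1 < (α y).1.length := by omega
            have he : (α y).1[(α y).1.length - 1]'hidx =
                ((α x).1 ++ w)[(α y).1.length - 1]'(by rw [hw]; exact hidx) :=
              List.getElem_of_eq hw.symm hidx
            have h1 : plast (α y) = (α y).1.getLast (α y).2 := rfl
            rw [h1, List.getLast_eq_getElem, he,
              List.getElem_append_right (by omega)]
            exact List.getElem_mem _
          have hwux : w.Sublist ux := by
            have : (α x).1 ++ w <+: (α x).1 ++ ux := by
              rw [hw, ← hux]; exact hya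
            exact ((List.prefix_append_right_inj _).mp this).sublist
          have : (plast (α y)).1 ∈ ux.map Prod.fst :=
            List.Sublist.mem (List.mem_map_of_mem hlast) (hwux.map _)
          rw [hxy] at hpx
          exact hpx this
        · have hpre : (α y).1 <+: (α x).1 := List.prefix_of_prefix_length_le hya hxa h
          obtain ⟨w, hw⟩ := hpre
          have hwne : w ≠ [] := by
            intro hw0
            rw [hw0, List.append_nil] at hw
            exact hlne hw.symm
          have hlast : plast (α x) ∈ w := by
            have hlw : (α y).1.length + w.length = (α x).1.length := by
              rw [← hw]; simp
            have hwpos : 0 < w.length := List.length_pos_iff.mpr hwne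
            have hxpos : 0 < (α x).1.length := List.length_pos_iff.mpr (α x).2
            have hidx : (α x).1.length - 1 < (α x).1.length := by omega
            have he : (α x).1[(α x).1.length - 1]'hidx =
                ((α y).1 ++ w)[(α x).1.length - 1]'(by rw [hw]; exact hidx) :=
              List.getElem_of_eq hw.symm hidx
            have h1 : plast (α x) = (α x).1.getLast (α x).2 := rfl
            rw [h1, List.getLast_eq_getElem, he,
              List.getElem_append_right (by omega)]
            exact List.getElem_mem _
          have hwuy : w.Sublist uy := by
            have : (α y).1 ++ w <+: (α y).1 ++ uy := by
              rw [hw, ← huy]; exact hxa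
            exact ((List.prefix_append_right_inj _).mp this).sublist
          have : (plast (α x)).1 ∈ uy.map Prod.fst :=
            List.Sublist.mem (List.mem_map_of_mem hlast) (hwuy.map _)
          rw [← hxy] at hpy
          exact hpy this
    rwa [Set.ncard_univ, Nat.card_eq_fintype_card, Fintype.card_fin] at this

lemma tdToCover {σ : RelVocab} (𝒜 : RelStruct σ) (hfin : Finite 𝒜.carrier) {k : ℕ}
    (hk : 1 ≤ k) (D : TreeDecomp 𝒜.carrier (gaif 𝒜))
    (hbags : ∀ x, (D.lam x).ncard ≤ k) :
    Nonempty (PebbleForestCover 𝒜.carrier (gaif 𝒜) k) := by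
  classical
  haveI : Finite 𝒜.carrier := hfin
  set V := 𝒜.carrier with hV
  -- least node containing a
  have hta : ∀ a : V, ∃ x, a ∈ D.lam x ∧ ∀ z, a ∈ D.lam z → D.le x z := by
    intro a
    obtain ⟨x0, hx0⟩ := D.td1 a
    have hSfin : ({y | D.le y x0 ∧ a ∈ D.lam y}).Finite :=
      (D.pred_finite x0).subset (fun y hy => hy.1)
    obtain ⟨m, hm, hmin⟩ := chain_least D.le D.refl D.trans hSfin.toFinset
      ⟨x0, by rw [Set.Finite.mem_toFinset]; exact ⟨D.refl x0, hx0⟩⟩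
      (by
        intro x hx y hy
        rw [Set.Finite.mem_toFinset] at hx hy
        by_cases hxy : x = y
        · exact Or.inl (hxy ▸ D.refl x)
        · exact D.pred_chain x0 hx.1 hy.1 hxy)
    rw [Set.Finite.mem_toFinset] at hm
    refine ⟨m, hm.2, ?_⟩
    intro z hz
    set w := D.meet m z with hw
    have hwm : D.le w m := D.meet_le_left m z
    have hwz : D.le w z := D.meet_le_right m z
    have haw : a ∈ D.lam w :=
      D.td3 a m z w hm.2 hz (Or.inl ⟨D.refl w, hwm⟩)
    have hwS : w ∈ hSfin.toFinset := by
      rw [Set.Finite.mem_toFinset]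
      exact ⟨D.trans _ _ _ hwm hm.1, haw⟩
    have hmw : D.le m w := hmin w hwS
    have : m = w := D.antisymm m w hmw hwm
    rw [this]
    exact hwz
  set t : V → D.T := fun a => (hta a).choose with htdef
  have ht1 : ∀ a : V, a ∈ D.lam (t a) := fun a => (hta a).choose_spec.1
  have ht2 : ∀ a : V, ∀ z, a ∈ D.lam z → D.le (t a) z := fun a => (hta a).choose_spec.2
  obtain ⟨n, ⟨e⟩⟩ := Finite.exists_equiv_fin V
  set le' : V → V → Prop := fun a b =>
    (D.le (t a) (t b) ∧ t a ≠ t b) ∨ (t a = t b ∧ e a ≤ e b) with hle'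
  have hD : ∀ a b : V, le' a b → D.le (t a) (t b) := by
    rintro a b (⟨h, _⟩ | ⟨h, _⟩)
    · exact h
    · rw [h]; exact D.refl _
  have hrefl : ∀ a, le' a a := fun a => Or.inr ⟨rfl, le_refl _⟩
  have hanti : ∀ a b, le' a b → le' b a → a = b := by
    rintro a b (⟨h1, h2⟩ | ⟨h1, h2⟩) (⟨h3, h4⟩ | ⟨h3, h4⟩)
    · exact absurd (D.antisymm _ _ h1 h3) h2
    · exact absurd h3.symm h2
    · exact absurd h1.symm h4
    · exact e.injective (le_antisymm h2 h4)
  have htrans : ∀ a b c, le' a b → le' b c → le' a c := by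
    rintro a b c (⟨h1, h2⟩ | ⟨h1, h2⟩) (⟨h3, h4⟩ | ⟨h3, h4⟩)
    · refine Or.inl ⟨D.trans _ _ _ h1 h3, ?_⟩
      intro hac
      exact h4 (D.antisymm _ _ h3 (hac ▸ h1))
    · exact Or.inl ⟨h3 ▸ h1, h3 ▸ h2⟩
    · exact Or.inl ⟨h1 ▸ h3, fun hac => h4 (hac ▸ h1.symm)⟩
    · exact Or.inr ⟨h1.trans h3, h2.trans h4⟩
  have hchain' : ∀ c : D.T, ∀ a a' : V, D.le (t a) c → D.le (t a') c →
      le' a a' ∨ le' a' a := by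
    intro c a a' h1 h2
    by_cases hneq : t a = t a'
    · rcases le_total (e a) (e a') with h | h
      · exact Or.inl (Or.inr ⟨hneq, h⟩)
      · exact Or.inr (Or.inr ⟨hneq.symm, h⟩)
    · rcases D.pred_chain c h1 h2 hneq with h | h
      · exact Or.inl (Or.inl ⟨h, hneq⟩)
      · exact Or.inr (Or.inl ⟨h, Ne.symm hneq⟩)
  -- key lemma : if le' v w and v is in some bag together with something above w, then
  -- v ∈ lam (t w)
  have hkey : ∀ (v w : V) (x : D.T), v ∈ D.lam x → D.le (t v) (t w) → D.le (t w) x →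
      v ∈ D.lam (t w) := by
    intro v w x hvx hvw hwx
    have hmeet : D.meet (t v) x = t v := by
      apply D.antisymm
      · exact D.meet_le_left _ _
      · exact D.le_meet _ _ _ (D.refl _) (ht2 v x hvx)
    exact D.td3 v (t v) x (t w) (ht1 v) hvx (Or.inr ⟨by rw [hmeet]; exact hvw, hwx⟩)
  -- pebbling
  obtain ⟨p, hp⟩ := exists_peb le' (fun b => D.lam (t b)) k hanti htrans
    (fun b => ht1 b) (fun b => hbags (t b)) hk
  refine ⟨{
    le := le'
    refl := hrefl
    antisymm := hanti
    trans := htrans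
    pred_finite := fun a => Set.toFinite _
    pred_chain := ?_
    cover := ?_
    peb := p
    peb_cond := ?_ }⟩
  · intro c a ha a' ha' hne
    exact hchain' (t c) a a' (hD a c ha) (hD a' c ha')
  · intro a a' hadj
    obtain ⟨x, hax, ha'x⟩ := D.td2 a a' hadj
    exact hchain' x a a' (ht2 a x hax) (ht2 a' x ha'x)
  · intro v v' w hadj hvv' hvw hne hwv'
    obtain ⟨x, hvx, hv'x⟩ := D.td2 v v' hadj
    have hv'le : D.le (t v') x := ht2 v' x hv'x
    have hvlam : v ∈ D.lam (t w) :=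
      hkey v w x hvx (hD v w hvw) (D.trans _ _ _ (hD w v' hwv') hv'le)
    exact hp v w hvw hne hvlam

/-- The tree-width of a finite structure is one less than its `P`-coalgebra number:
for every `k ≥ 1`, the Gaifman graph of `𝒜` has a tree decomposition of width at most
`k - 1` (all bags of size at most `k`) iff there is a `P_k`-coalgebra on `𝒜`; hence
`tw(𝒜) + 1 = κ^P(𝒜)`. -/
theorem stmt13 (σ : RelVocab) (𝒜 : RelStruct σ) (hfin : Finite 𝒜.carrier) :
    (∀ k : ℕ, 1 ≤ k →
      ((∃ D : TreeDecomp 𝒜.carrier (gaif 𝒜), ∀ x, (D.lam x).Finite ∧ (D.lam x).ncard ≤ k)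
        ↔ Nonempty (PkCoalgebra 𝒜 k))) ∧
    sInf {w : ℕ | ∃ D : TreeDecomp 𝒜.carrier (gaif 𝒜),
        ∀ x, (D.lam x).Finite ∧ (D.lam x).ncard ≤ w + 1} + 1 =
      sInf {k : ℕ | 1 ≤ k ∧ Nonempty (PkCoalgebra 𝒜 k)} := by
    classical
  have H : ∀ k : ℕ, 1 ≤ k →
      ((∃ D : TreeDecomp 𝒜.carrier (gaif 𝒜), ∀ x, (D.lam x).Finite ∧ (D.lam x).ncard ≤ k)
        ↔ Nonempty (PkCoalgebra 𝒜 k)) := by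
    intro k hk
    constructor
    · rintro ⟨D, hD⟩
      obtain ⟨C⟩ := tdToCover 𝒜 hfin hk D (fun x => (hD x).2)
      exact coverToCoalg 𝒜 hfin C
    · rintro ⟨G⟩
      exact coalgToTD 𝒜 hfin G
  refine ⟨H, ?_⟩
  -- trivial tree decomposition
  have hD0 : ∃ D : TreeDecomp 𝒜.carrier (gaif 𝒜),
      ∀ x, (D.lam x).Finite ∧ (D.lam x).ncard ≤ Nat.card 𝒜.carrier + 1 := by
    refine ⟨{
      T := PUnit
      le := fun _ _ => True
      refl := fun _ => trivial
      antisymm := fun x y _ _ => Subsingleton.elim x y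
      trans := fun _ _ _ _ _ => trivial
      pred_finite := fun _ => Set.toFinite _
      pred_chain := fun _ _ _ _ _ _ => Or.inl trivial
      bot := PUnit.unit
      bot_le := fun _ => trivial
      meet := fun _ _ => PUnit.unit
      meet_le_left := fun _ _ => trivial
      meet_le_right := fun _ _ => trivial
      le_meet := fun _ _ _ _ _ => trivial
      lam := fun _ => Set.univ
      td1 := fun v => ⟨PUnit.unit, Set.mem_univ v⟩
      td2 := fun v v' _ => ⟨PUnit.unit, Set.mem_univ v, Set.mem_univ v'⟩
      td3 := fun v _ _ _ _ _ _ => Set.mem_univ v }, ?_⟩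
    intro x
    refine ⟨Set.toFinite _, ?_⟩
    rw [Set.ncard_univ]
    omega
  set S1 := {w : ℕ | ∃ D : TreeDecomp 𝒜.carrier (gaif 𝒜),
      ∀ x, (D.lam x).Finite ∧ (D.lam x).ncard ≤ w + 1} with hS1
  set S2 := {k : ℕ | 1 ≤ k ∧ Nonempty (PkCoalgebra 𝒜 k)} with hS2
  have h1 : S1.Nonempty := ⟨Nat.card 𝒜.carrier, hD0⟩
  have hm : sInf S1 ∈ S1 := Nat.sInf_mem h1
  obtain ⟨D, hD⟩ := hm
  have hc : Nonempty (PkCoalgebra 𝒜 (sInf S1 + 1)) :=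
    (H (sInf S1 + 1) (by omega)).mp ⟨D, hD⟩
  have hmem2 : sInf S1 + 1 ∈ S2 := ⟨by omega, hc⟩
  have h2 : S2.Nonempty := ⟨_, hmem2⟩
  have hn : sInf S2 ∈ S2 := Nat.sInf_mem h2
  obtain ⟨hn1, hnc⟩ := hn
  obtain ⟨D', hD'⟩ := (H (sInf S2) hn1).mpr hnc
  have hmem1 : sInf S2 - 1 ∈ S1 := by
    refine ⟨D', ?_⟩
    intro x
    refine ⟨(hD' x).1, ?_⟩
    have := (hD' x).2
    omega
  have hle1 : sInf S1 ≤ sInf S2 - 1 := Nat.sInf_le hmem1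
  have hle2 : sInf S2 ≤ sInf S1 + 1 := Nat.sInf_le hmem2
  omega
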